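/- arXiv:1906.04933 — 3 statements merged into one kernel-verified Lean document; each statement's English description precedes it below -/
import Mathlib

section
/- Let (Ω, F, P) be a probability space, ẑ : Ω → [0,1] a random variable (the confidence score), and A ∈ F an event (the event that the classifier's prediction is correct) with 0 < P(A) < 1. Define the overconfidence o = E[ẑ | Aᶜ], the underconfidence u = E[1 − ẑ | A], and for 1 ≤ p < ∞ the expected calibration error ECE_p = E[|ẑ − E[1_A | ẑ]|^p]^{1/p}, where E[1_A | ẑ] denotes the conditional expectation of the indicator of A given the σ-algebra generated by ẑ. Then |o · P(Aᶜ) − u · P(A)| ≤ ECE_p. -/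
open MeasureTheory ProbabilityTheory

/-- The weighted absolute difference of over- and underconfidence is bounded by the
expected calibration error `ECE_p`. -/
theorem overconfidence_underconfidence_le_ECE
    {Ω : Type*} [MeasurableSpace Ω] (μ : Measure Ω) [IsProbabilityMeasure μ]
    (z : Ω → ℝ) (hz_meas : Measurable z) (hz01 : ∀ ω, z ω ∈ Set.Icc (0 : ℝ) 1)
    (A : Set Ω) (hA : MeasurableSet A) (hA0 : 0 < μ A) (hA1 : μ A < 1)
    (p : ℝ) (hp : 1 ≤ p)
    (o u ece : ℝ)
    (ho : o = ∫ ω, z ω ∂(μ[|Aᶜ]))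
    (hu : u = ∫ ω, (1 - z ω) ∂(μ[|A]))
    (hece : ece = (∫ ω, |z ω -
        (μ[A.indicator (fun _ => (1 : ℝ)) | MeasurableSpace.comap z Real.measurableSpace]) ω| ^ p ∂μ)
        ^ (1 / p)) :
    |o * (μ Aᶜ).toReal - u * (μ A).toReal| ≤ ece := by
  have hp0 : 0 < p := lt_of_lt_of_le one_pos hp
  have hm : MeasurableSpace.comap z Real.measurableSpace ≤ ‹MeasurableSpace Ω› :=
    hz_meas.comap_le
  set g := μ[A.indicator (fun _ => (1 : ℝ)) | MeasurableSpace.comap z Real.measurableSpace]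
    with hg_def
  -- basic measure facts
  have hμA_ne_top : μ A ≠ ⊤ := (measure_lt_top μ A).ne
  have hμAc0 : μ Aᶜ ≠ 0 := by
    rw [measure_compl hA hμA_ne_top, measure_univ]
    intro h
    exact absurd (tsub_eq_zero_iff_le.mp h) (not_le.mpr hA1)
  have hb_ne : (μ Aᶜ).toReal ≠ 0 := by
    simp [ENNReal.toReal_eq_zero_iff, hμAc0, (measure_lt_top μ Aᶜ).ne]
  have ha_ne : (μ A).toReal ≠ 0 := by
    simp [ENNReal.toReal_eq_zero_iff, hA0.ne', hμA_ne_top]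
  -- integrability
  have hz_int : Integrable z μ := by
    refine (integrable_const (1 : ℝ)).mono' hz_meas.aestronglyMeasurable ?_
    filter_upwards with ω
    have h := hz01 ω
    rw [Real.norm_eq_abs, abs_le]
    exact ⟨by linarith [h.1], h.2⟩
  have hind_int : Integrable (A.indicator (fun _ => (1 : ℝ))) μ :=
    (integrable_const (1 : ℝ)).indicator hA
  have hg_int : Integrable g μ := integrable_condExp
  have hf_int : Integrable (fun ω => z ω - g ω) μ := hz_int.sub hg_int
  -- bounds on g
  have hg0 : 0 ≤ᵐ[μ] g :=
    condExp_nonneg (Filter.Eventually.of_forall fun ω =>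
      Set.indicator_nonneg (fun _ _ => zero_le_one) ω)
  have hg1 : g ≤ᵐ[μ] fun _ => (1 : ℝ) := by
    have h := condExp_mono (m := MeasurableSpace.comap z Real.measurableSpace)
      hind_int (integrable_const (1 : ℝ))
      (Filter.Eventually.of_forall fun ω =>
        Set.indicator_le_self' (fun _ _ => zero_le_one) ω)
    rwa [condExp_const hm (1 : ℝ)] at h
  -- ∫ g = μ A
  have hint_g : ∫ ω, g ω ∂μ = (μ A).toReal := by
    rw [hg_def, integral_condExp hm, integral_indicator_const (1 : ℝ) hA, smul_eq_mul, mul_one]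
    rfl
  -- over/under confidence computations
  have hoB : o * (μ Aᶜ).toReal = ∫ ω in Aᶜ, z ω ∂μ := by
    rw [ho, ProbabilityTheory.cond, integral_smul_measure, ENNReal.toReal_inv, smul_eq_mul]
    field_simp
  have huA : u * (μ A).toReal = (μ A).toReal - ∫ ω in A, z ω ∂μ := by
    rw [hu, ProbabilityTheory.cond, integral_smul_measure, ENNReal.toReal_inv, smul_eq_mul]
    rw [integral_sub (integrable_const (1 : ℝ)).integrableOn hz_int.integrableOn,
      setIntegral_const, smul_eq_mul, mul_one]
    field_simp
    rfl
  have hsum : (∫ ω in A, z ω ∂μ) + ∫ ω in Aᶜ, z ω ∂μ = ∫ ω, z ω ∂μ :=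
    integral_add_compl hA hz_int
  have hkey : o * (μ Aᶜ).toReal - u * (μ A).toReal = ∫ ω, (z ω - g ω) ∂μ := by
    rw [hoB, huA, integral_sub hz_int hg_int, hint_g]
    linarith
  -- |∫ f| ≤ ∫ |f|
  have habs : |∫ ω, (z ω - g ω) ∂μ| ≤ ∫ ω, |z ω - g ω| ∂μ := by
    have := norm_integral_le_integral_norm (μ := μ) (fun ω => z ω - g ω)
    simpa [Real.norm_eq_abs] using this
  -- integrability of |f| and |f|^p
  have habs_int : Integrable (fun ω => |z ω - g ω|) μ := hf_int.abs
  have habs_bd : ∀ᵐ ω ∂μ, |z ω - g ω| ≤ 1 := by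
    filter_upwards [hg0, hg1] with ω h0 h1
    have hz := hz01 ω
    have h0' : (0 : ℝ) ≤ g ω := h0
    have h1' : g ω ≤ 1 := h1
    rw [abs_le]
    exact ⟨by linarith [hz.1], by linarith [hz.2]⟩
  have hpow_meas : AEStronglyMeasurable (fun ω => |z ω - g ω| ^ p) μ :=
    (Real.continuous_rpow_const hp0.le).comp_aestronglyMeasurable habs_int.aestronglyMeasurable
  have hpow_int : Integrable (fun ω => |z ω - g ω| ^ p) μ := by
    refine (integrable_const (1 : ℝ)).mono' hpow_meas ?_
    filter_upwards [habs_bd] with ω hω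
    rw [Real.norm_eq_abs, abs_of_nonneg (Real.rpow_nonneg (abs_nonneg _) p)]
    calc |z ω - g ω| ^ p ≤ 1 ^ p := Real.rpow_le_rpow (abs_nonneg _) hω hp0.le
      _ = 1 := Real.one_rpow p
  -- Jensen: (∫ |f|)^p ≤ ∫ |f|^p
  have hjensen : (∫ ω, |z ω - g ω| ∂μ) ^ p ≤ ∫ ω, |z ω - g ω| ^ p ∂μ := by
    have hconv : ConvexOn ℝ (Set.Ici 0) fun x : ℝ => x ^ p := convexOn_rpow hp
    have hcont : ContinuousOn (fun x : ℝ => x ^ p) (Set.Ici 0) :=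
      (Real.continuous_rpow_const hp0.le).continuousOn
    have h := hconv.map_average_le hcont isClosed_Ici
      (Filter.Eventually.of_forall fun ω => Set.mem_Ici.mpr (abs_nonneg _)) habs_int hpow_int
    rwa [average_eq_integral, average_eq_integral] at h
  -- conclude
  have hnn : 0 ≤ ∫ ω, |z ω - g ω| ∂μ := integral_nonneg fun ω => abs_nonneg _
  have hfinal : ∫ ω, |z ω - g ω| ∂μ ≤ (∫ ω, |z ω - g ω| ^ p ∂μ) ^ (1 / p) := by
    calc ∫ ω, |z ω - g ω| ∂μ = ((∫ ω, |z ω - g ω| ∂μ) ^ p) ^ (1 / p) := by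
          rw [← Real.rpow_mul hnn, mul_one_div, div_self hp0.ne', Real.rpow_one]
      _ ≤ (∫ ω, |z ω - g ω| ^ p ∂μ) ^ (1 / p) :=
          Real.rpow_le_rpow (Real.rpow_nonneg hnn p) hjensen (by positivity)
  rw [hece, hkey]
  exact le_trans habs hfinal
end

section
/- Let (Ω, F, P) be a probability space, ẑ : Ω → [0,1] a random variable, and A ∈ F an event with 0 < P(A) < 1. Define the overconfidence o = E[ẑ | Aᶜ] and the underconfidence u = E[1 − ẑ | A], and let E[1_A | ẑ] denote the conditional expectation of 1_A given σ(ẑ). Then E[ẑ − E[1_A | ẑ]] = o · P(Aᶜ) − u · P(A). -/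
open MeasureTheory ProbabilityTheory

/-- `E[ẑ − E[1_A | ẑ]] = o · P(Aᶜ) − u · P(A)`. -/
theorem mean_miscalibration_eq_over_minus_under
    {Ω : Type*} [MeasurableSpace Ω] (μ : Measure Ω) [IsProbabilityMeasure μ]
    (z : Ω → ℝ) (hz_meas : Measurable z) (hz01 : ∀ ω, z ω ∈ Set.Icc (0 : ℝ) 1)
    (A : Set Ω) (hA : MeasurableSet A) (hA0 : 0 < μ A) (hA1 : μ A < 1)
    (o u : ℝ)
    (ho : o = ∫ ω, z ω ∂(μ[|Aᶜ]))
    (hu : u = ∫ ω, (1 - z ω) ∂(μ[|A])) :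
    ∫ ω, (z ω -
        (μ[A.indicator (fun _ => (1 : ℝ)) | MeasurableSpace.comap z Real.measurableSpace]) ω) ∂μ
      = o * (μ Aᶜ).toReal - u * (μ A).toReal := by
  have hz_int : Integrable z μ := by
    refine Integrable.mono' (integrable_const 1) hz_meas.aestronglyMeasurable ?_
    filter_upwards with ω
    have h := hz01 ω
    rw [Real.norm_eq_abs, abs_le]
    constructor <;> linarith [h.1, h.2]
  have hind_int : Integrable (A.indicator (fun _ => (1 : ℝ))) μ :=
    (integrable_const 1).indicator hA
  have hle : MeasurableSpace.comap z Real.measurableSpace ≤ ‹MeasurableSpace Ω› :=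
    hz_meas.comap_le
  have hcond_int : Integrable
      (μ[A.indicator (fun _ => (1 : ℝ)) | MeasurableSpace.comap z Real.measurableSpace]) μ :=
    integrable_condExp
  have hA0' : μ A ≠ 0 := hA0.ne'
  have hAne : μ A ≠ ⊤ := (measure_lt_top μ A).ne
  have hAc0 : μ Aᶜ ≠ 0 := by
    rw [measure_compl hA hAne, measure_univ]
    simpa [tsub_eq_zero_iff_le, not_le] using hA1.ne
  have hAcne : μ Aᶜ ≠ ⊤ := (measure_lt_top μ Aᶜ).ne
  -- value of condexp integral
  have hce : ∫ ω, (μ[A.indicator (fun _ => (1 : ℝ)) |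
      MeasurableSpace.comap z Real.measurableSpace]) ω ∂μ = (μ A).toReal := by
    rw [integral_condExp hle, integral_indicator_const _ hA]
    simp
    rfl
  -- conditional integrals
  have hcondA : ∀ (f : Ω → ℝ) (S : Set Ω), μ S ≠ 0 → μ S ≠ ⊤ →
      (∫ ω, f ω ∂(μ[|S])) * (μ S).toReal = ∫ ω in S, f ω ∂μ := by
    intro f S hS0 hST
    rw [ProbabilityTheory.cond, integral_smul_measure]
    rw [ENNReal.toReal_inv, smul_eq_mul, mul_comm, ← mul_assoc,
      mul_inv_cancel₀ (ENNReal.toReal_ne_zero.mpr ⟨hS0, hST⟩), one_mul]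
  have ho' : o * (μ Aᶜ).toReal = ∫ ω in Aᶜ, z ω ∂μ := by
    rw [ho]; exact hcondA z Aᶜ hAc0 hAcne
  have hu' : u * (μ A).toReal = (μ A).toReal - ∫ ω in A, z ω ∂μ := by
    rw [hu, hcondA _ A hA0' hAne,
      integral_sub (integrable_const 1).integrableOn hz_int.integrableOn]
    simp [measure_univ]
    rfl
  have hsplit : ∫ ω, z ω ∂μ = (∫ ω in A, z ω ∂μ) + ∫ ω in Aᶜ, z ω ∂μ :=
    (integral_add_compl hA hz_int).symm
  rw [integral_sub hz_int hcond_int, hce, ho', hu', hsplit]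
  ring
end

section
/- Let (Ω, F, P) be a probability space, ẑ : Ω → [0,1] a random variable, and A ∈ F an event with 0 < P(A) < 1. Define the overconfidence o = E[ẑ | Aᶜ] and the underconfidence u = E[1 − ẑ | A]. If the classifier is perfectly calibrated, i.e. E[1_A | ẑ] = ẑ almost surely (where E[1_A | ẑ] is the conditional expectation of 1_A given σ(ẑ)), then o · P(Aᶜ) = u · P(A); equivalently, the odds P(A)/P(Aᶜ) of making a correct prediction equal the ratio o/u between over- and underconfidence whenever u > 0. -/
open MeasureTheory ProbabilityTheory

/-- For a perfectly calibrated classifier, `o · P(Aᶜ) = u · P(A)`; equivalently the odds of a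
correct prediction equal the ratio between over- and underconfidence whenever `u > 0`. -/
theorem perfect_calibration_odds
    {Ω : Type*} [MeasurableSpace Ω] (μ : Measure Ω) [IsProbabilityMeasure μ]
    (z : Ω → ℝ) (hz_meas : Measurable z) (hz01 : ∀ ω, z ω ∈ Set.Icc (0 : ℝ) 1)
    (A : Set Ω) (hA : MeasurableSet A) (hA0 : 0 < μ A) (hA1 : μ A < 1)
    (o u : ℝ)
    (ho : o = ∫ ω, z ω ∂(μ[|Aᶜ]))
    (hu : u = ∫ ω, (1 - z ω) ∂(μ[|A]))
    (hcal : (μ[A.indicator (fun _ => (1 : ℝ)) | MeasurableSpace.comap z Real.measurableSpace])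
      =ᵐ[μ] z) :
    o * (μ Aᶜ).toReal = u * (μ A).toReal ∧
      (0 < u → (μ A).toReal / (μ Aᶜ).toReal = o / u) := by
  have hμA_ne : μ A ≠ ⊤ := (measure_lt_top μ A).ne
  have hμAc_ne : μ Aᶜ ≠ ⊤ := (measure_lt_top μ Aᶜ).ne
  have hμAc0 : 0 < μ Aᶜ := by
    rw [prob_compl_eq_one_sub hA]
    exact tsub_pos_of_lt hA1
  set a := (μ A).toReal with ha
  set c := (μ Aᶜ).toReal with hc
  have ha0 : 0 < a := ENNReal.toReal_pos hA0.ne' hμA_ne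
  have hc0 : 0 < c := ENNReal.toReal_pos hμAc0.ne' hμAc_ne
  have hzint : Integrable z μ := by
    refine (integrable_const (1 : ℝ)).mono' hz_meas.aestronglyMeasurable ?_
    filter_upwards with ω
    rw [Real.norm_eq_abs, abs_le]
    exact ⟨le_trans (by norm_num) (hz01 ω).1, (hz01 ω).2⟩
  have hm : MeasurableSpace.comap z Real.measurableSpace ≤ ‹MeasurableSpace Ω› :=
    hz_meas.comap_le
  have hz_int_eq : ∫ ω, z ω ∂μ = a := by
    have h1 : ∫ ω, z ω ∂μ
        = ∫ ω, (μ[A.indicator (fun _ => (1 : ℝ)) |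
            MeasurableSpace.comap z Real.measurableSpace]) ω ∂μ :=
      integral_congr_ae hcal.symm
    rw [h1, integral_condExp hm, integral_indicator_const _ hA]
    simp [ha]
    rfl
  have hsplit : ∫ ω in A, z ω ∂μ + ∫ ω in Aᶜ, z ω ∂μ = a := by
    rw [integral_add_compl hA hzint]; exact hz_int_eq
  have hoc : o * c = ∫ ω in Aᶜ, z ω ∂μ := by
    rw [ho]; simp only [ProbabilityTheory.cond]; rw [integral_smul_measure, smul_eq_mul, ENNReal.toReal_inv, ← hc]
    field_simp
  have hua : u * a = a - ∫ ω in A, z ω ∂μ := by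
    rw [hu]; simp only [ProbabilityTheory.cond]; rw [integral_smul_measure, smul_eq_mul, ENNReal.toReal_inv, ← ha]
    have h2 : ∫ ω in A, (1 - z ω) ∂μ = a - ∫ ω in A, z ω ∂μ := by
      rw [integral_sub (integrable_const 1).integrableOn hzint.integrableOn]
      simp [ha, measure_ne_top]
      rfl
    rw [h2]
    field_simp
  have key : o * c = u * a := by
    rw [hoc, hua]; linarith
  refine ⟨key, fun hu0 => ?_⟩
  rw [div_eq_div_iff hc0.ne' hu0.ne']
  linarith
end
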